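/- arXiv:1507.01356 — 7 statements merged into one kernel-verified Lean document; each statement's English description precedes it below -/
import Mathlib

section
/- Let σ > 0, let θ ∈ (0,π), let y ≥ 0, and set √q := e^{σπ/2} + e^{−σπ/2} (i.e. cosh(σπ/2) = √q/2) and Λ_θ(y) = e^{−σ(π−θ)}·(y + e^{σπ/2})/(y + e^{−σπ/2}). Then e^{σθ} + e^{−σ(π−θ)}·(1 + y·√q) = Λ_θ(y)·(1 + y·√q + e^{−σπ}). -/
open Real

theorem face_relation_identity
    (σ θ y : ℝ) (hσ : 0 < σ) (hθ : θ ∈ Set.Ioo 0 π) (hy : 0 ≤ y)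
    (sqrtq : ℝ) (hq : sqrtq = Real.exp (σ * π / 2) + Real.exp (-σ * π / 2))
    (Λ : ℝ → ℝ)
    (hΛ : ∀ z : ℝ, Λ z = Real.exp (-σ * (π - θ)) *
      ((z + Real.exp (σ * π / 2)) / (z + Real.exp (-σ * π / 2)))) :
    Real.exp (σ * θ) + Real.exp (-σ * (π - θ)) * (1 + y * sqrtq)
      = Λ y * (1 + y * sqrtq + Real.exp (-σ * π)) := by
  have ha : (0:ℝ) < Real.exp (σ * π / 2) := Real.exp_pos _
  have h1 : Real.exp (-σ * π / 2) = (Real.exp (σ * π / 2))⁻¹ := by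
    rw [← Real.exp_neg]; ring_nf
  have h2 : Real.exp (σ * θ) = Real.exp (-σ * (π - θ)) * (Real.exp (σ * π / 2))^2 := by
    rw [← Real.exp_nat_mul, ← Real.exp_add]; ring_nf
  have h3 : Real.exp (-σ * π) = ((Real.exp (σ * π / 2))^2)⁻¹ := by
    rw [← Real.exp_nat_mul, ← Real.exp_neg]; ring_nf
  have hden : y + Real.exp (-σ * π / 2) ≠ 0 := by positivity
  rw [hΛ, hq, h1, h2, h3] at *
  field_simp
  ring
end

section
/- Let σ > 0, let θ ∈ (0,π), let x > 0 satisfy Λ_θ(x) = 1, where Λ_θ(y) = e^{−σ(π−θ)}·(y + e^{σπ/2})/(y + e^{−σπ/2}), and let β ∈ (0,1]. Then Λ_θ(βx) − 1 = 2(1−β)·x·sinh(σπ/2) / ((x + e^{σπ/2})·(βx + e^{−σπ/2})). In particular, Λ_θ(βx) > 1 for every β ∈ (0,1), and Λ_θ(x) = 1 at β = 1. -/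
open Real

theorem subcritical_coefficient_formula
    (σ θ x β : ℝ) (hσ : 0 < σ) (hθ : θ ∈ Set.Ioo 0 π) (hx : 0 < x)
    (Λ : ℝ → ℝ)
    (hΛ : ∀ y : ℝ, Λ y = Real.exp (-σ * (π - θ)) *
      ((y + Real.exp (σ * π / 2)) / (y + Real.exp (-σ * π / 2))))
    (hcrit : Λ x = 1)
    (hβ : β ∈ Set.Ioc (0 : ℝ) 1) :
    Λ (β * x) - 1 = 2 * (1 - β) * x * Real.sinh (σ * π / 2) /
      ((x + Real.exp (σ * π / 2)) * (β * x + Real.exp (-σ * π / 2)))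
    ∧ (β < 1 → 1 < Λ (β * x))
    ∧ (β = 1 → Λ (β * x) = 1) := by
  obtain ⟨hβ0, hβ1⟩ := hβ
  set A := Real.exp (σ * π / 2) with hAdef
  set B := Real.exp (-σ * π / 2) with hBdef
  have hA : 0 < A := Real.exp_pos _
  have hB : 0 < B := Real.exp_pos _
  have h1 : 0 < x + A := by positivity
  have h2 : 0 < x + B := by positivity
  have h3 : 0 < β * x + B := by positivity
  have h4 : 0 < β * x + A := by positivity
  -- from criticality
  have hc : Real.exp (-σ * (π - θ)) = (x + B) / (x + A) := by
    have := hcrit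
    rw [hΛ x] at this
    field_simp at this ⊢
    linarith [this]
  have hsinh : Real.sinh (σ * π / 2) = (A - B) / 2 := by
    rw [Real.sinh_eq, hAdef, hBdef, show -(σ * π / 2) = -σ * π / 2 from by ring]
  have hΛβ : Λ (β * x) = (x + B) * (β * x + A) / ((x + A) * (β * x + B)) := by
    rw [hΛ (β * x), hc]
    field_simp
  have key : Λ (β * x) - 1 = 2 * (1 - β) * x * Real.sinh (σ * π / 2) /
      ((x + A) * (β * x + B)) := by
    rw [hΛβ, hsinh]
    field_simp
    ring
  refine ⟨key, ?_, ?_⟩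
  · intro hlt
    have hpos : 0 < 2 * (1 - β) * x * Real.sinh (σ * π / 2) /
        ((x + A) * (β * x + B)) := by
      have hAB : B < A := Real.exp_lt_exp.mpr (by nlinarith [Real.pi_pos])
      have hs : 0 < Real.sinh (σ * π / 2) := by rw [hsinh]; linarith
      have : 0 < 1 - β := by linarith
      positivity
    linarith [key]
  · intro h1'
    have : Λ (β * x) - 1 = 0 := by rw [key, h1']; simp
    linarith
end

section
/- Let σ > 0, β ∈ (0,1), and θ₀ ∈ (0, π/2]. Then there exists a constant c > 0, depending only on σ, β and θ₀, such that for every θ ∈ [θ₀, π−θ₀], Λ_θ(β·x_θ) − 1 ≥ c, where x_θ = sinh(σθ/2)/sinh(σ(π−θ)/2) and Λ_θ(y) = e^{−σ(π−θ)}·(y + e^{σπ/2})/(y + e^{−σπ/2}). -/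
open Real

private lemma key_pos (σ β θ : ℝ) (hσ : 0 < σ) (hβ0 : 0 < β) (hβ1 : β < 1)
    (hθ : 0 < θ) (hθπ : θ < π) :
    0 < Real.exp (-σ * (π - θ)) *
        ((β * (Real.sinh (σ * θ / 2) / Real.sinh (σ * (π - θ) / 2)) + Real.exp (σ * π / 2)) /
         (β * (Real.sinh (σ * θ / 2) / Real.sinh (σ * (π - θ) / 2)) + Real.exp (-σ * π / 2)))
        - 1 := by
  have ha : 0 < σ * θ / 2 := by positivity
  have hπθ : 0 < π - θ := by linarith
  have hb : 0 < σ * (π - θ) / 2 := by positivity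
  set u := Real.exp (σ * θ / 2) with hu_def
  set v := Real.exp (σ * (π - θ) / 2) with hv_def
  have hu0 : 0 < u := Real.exp_pos _
  have hv0 : 0 < v := Real.exp_pos _
  have hsa : Real.sinh (σ * θ / 2) = (u ^ 2 - 1) / (2 * u) := by
    rw [Real.sinh_eq, Real.exp_neg]
    field_simp [(Real.exp_pos (σ * θ / 2)).ne']
    ring
  have hsb : Real.sinh (σ * (π - θ) / 2) = (v ^ 2 - 1) / (2 * v) := by
    rw [Real.sinh_eq, Real.exp_neg]
    field_simp [(Real.exp_pos (σ * (π - θ) / 2)).ne']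
    ring
  have hsa0 : 0 < Real.sinh (σ * θ / 2) := Real.sinh_pos_iff.mpr ha
  have hsb0 : 0 < Real.sinh (σ * (π - θ) / 2) := Real.sinh_pos_iff.mpr hb
  have he1 : Real.exp (σ * π / 2) = u * v := by
    rw [← Real.exp_add]; congr 1; ring
  have he2 : Real.exp (-σ * π / 2) = (u * v)⁻¹ := by
    rw [← he1, ← Real.exp_neg]; congr 1; ring
  have he3 : Real.exp (-σ * (π - θ)) = (v * v)⁻¹ := by
    rw [show v * v = Real.exp (σ * (π - θ) / 2 + σ * (π - θ) / 2) from (Real.exp_add _ _).symm,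
      ← Real.exp_neg]
    congr 1; ring
  set x := Real.sinh (σ * θ / 2) / Real.sinh (σ * (π - θ) / 2) with hx_def
  have hx0 : 0 < x := div_pos hsa0 hsb0
  have hD : 0 < β * x + Real.exp (-σ * π / 2) := by positivity
  have hv1 : 1 < v := by
    rw [hv_def, ← Real.exp_zero]
    exact Real.exp_lt_exp.mpr hb
  have hv21 : v ^ 2 - 1 ≠ 0 := by nlinarith
  have hexp1 : Real.exp (-σ * (π - θ)) < 1 := by
    rw [Real.exp_lt_one_iff]; nlinarith
  have hid : Real.exp (-σ * (π - θ)) * (β * x + Real.exp (σ * π / 2)) -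
      (β * x + Real.exp (-σ * π / 2)) =
      Real.sinh (σ * θ / 2) * (1 - Real.exp (-σ * (π - θ))) * (1 - β) /
        Real.sinh (σ * (π - θ) / 2) := by
    rw [hx_def, he1, he2, he3, hsa, hsb]
    field_simp
    ring
  have hRpos : 0 < Real.sinh (σ * θ / 2) * (1 - Real.exp (-σ * (π - θ))) * (1 - β) /
      Real.sinh (σ * (π - θ) / 2) := by
    apply div_pos _ hsb0
    have h1 : 0 < 1 - Real.exp (-σ * (π - θ)) := by linarith
    have h2 : 0 < 1 - β := by linarith
    positivity
  have key : β * x + Real.exp (-σ * π / 2) <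
      Real.exp (-σ * (π - θ)) * (β * x + Real.exp (σ * π / 2)) := by linarith
  have h1 : 1 < Real.exp (-σ * (π - θ)) * (β * x + Real.exp (σ * π / 2)) /
      (β * x + Real.exp (-σ * π / 2)) := (one_lt_div hD).mpr key
  rw [← mul_div_assoc]
  linarith

theorem uniform_coefficient_lower_bound
    (σ β θ₀ : ℝ) (hσ : 0 < σ) (hβ : β ∈ Set.Ioo (0 : ℝ) 1)
    (hθ₀ : θ₀ ∈ Set.Ioc 0 (π / 2)) :
    ∃ c : ℝ, 0 < c ∧ ∀ θ : ℝ, θ ∈ Set.Icc θ₀ (π - θ₀) →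
      Real.exp (-σ * (π - θ)) *
        ((β * (Real.sinh (σ * θ / 2) / Real.sinh (σ * (π - θ) / 2)) + Real.exp (σ * π / 2)) /
         (β * (Real.sinh (σ * θ / 2) / Real.sinh (σ * (π - θ) / 2)) + Real.exp (-σ * π / 2)))
        - 1 ≥ c := by
  obtain ⟨hβ0, hβ1⟩ := hβ
  obtain ⟨hθ0, hθhalf⟩ := hθ₀
  set F : ℝ → ℝ := fun θ =>
    Real.exp (-σ * (π - θ)) *
        ((β * (Real.sinh (σ * θ / 2) / Real.sinh (σ * (π - θ) / 2)) + Real.exp (σ * π / 2)) /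
         (β * (Real.sinh (σ * θ / 2) / Real.sinh (σ * (π - θ) / 2)) + Real.exp (-σ * π / 2)))
        - 1 with hF
  have hKne : (Set.Icc θ₀ (π - θ₀)).Nonempty := ⟨θ₀, le_refl _, by linarith⟩
  have hbounds : ∀ θ ∈ Set.Icc θ₀ (π - θ₀), 0 < θ ∧ θ < π := by
    intro θ ⟨h1, h2⟩
    constructor <;> [linarith; nlinarith [Real.pi_pos]]
  have hsbne : ∀ θ ∈ Set.Icc θ₀ (π - θ₀), Real.sinh (σ * (π - θ) / 2) ≠ 0 := by
    intro θ hθ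
    have := (hbounds θ hθ).2
    have h : 0 < σ * (π - θ) / 2 := by
      have : 0 < π - θ := by linarith
      positivity
    exact (Real.sinh_pos_iff.mpr h).ne'
  have hDne : ∀ θ ∈ Set.Icc θ₀ (π - θ₀),
      β * (Real.sinh (σ * θ / 2) / Real.sinh (σ * (π - θ) / 2)) + Real.exp (-σ * π / 2) ≠ 0 := by
    intro θ hθ
    obtain ⟨h1, h2⟩ := hbounds θ hθ
    have ha : 0 < σ * θ / 2 := by positivity
    have hb : 0 < σ * (π - θ) / 2 := by
      have : 0 < π - θ := by linarith
      positivity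
    have hx0 : 0 < Real.sinh (σ * θ / 2) / Real.sinh (σ * (π - θ) / 2) :=
      div_pos (Real.sinh_pos_iff.mpr ha) (Real.sinh_pos_iff.mpr hb)
    positivity
  have hcx : ContinuousOn
      (fun θ : ℝ => β * (Real.sinh (σ * θ / 2) / Real.sinh (σ * (π - θ) / 2)))
      (Set.Icc θ₀ (π - θ₀)) := by
    apply ContinuousOn.mul continuousOn_const
    apply ContinuousOn.div
    · exact (Real.continuous_sinh.comp (by continuity)).continuousOn
    · exact (Real.continuous_sinh.comp (by continuity)).continuousOn
    · exact hsbne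
  have hcont : ContinuousOn F (Set.Icc θ₀ (π - θ₀)) := by
    apply ContinuousOn.sub _ continuousOn_const
    apply ContinuousOn.mul
    · exact (Real.continuous_exp.comp (by continuity)).continuousOn
    · exact ContinuousOn.div (hcx.add continuousOn_const) (hcx.add continuousOn_const) hDne
  obtain ⟨θm, hθmK, hmin⟩ := isCompact_Icc.exists_isMinOn hKne hcont
  refine ⟨F θm, ?_, fun θ hθ => hmin hθ⟩
  obtain ⟨h1, h2⟩ := hbounds θm hθmK
  exact key_pos σ β θm hσ hβ0 hβ1 h1 h2
end

section
/- Let q > 4 and let σ > 0 satisfy cosh(σπ/2) = √q/2. Let p₁, p₂ ∈ (0,1) satisfy p₁·p₂ = q·(1−p₁)·(1−p₂). Then there exists a unique θ ∈ (0,π) such that p₁/((1−p₁)·√q) = sinh(σθ/2)/sinh(σ(π−θ)/2) and p₂/((1−p₂)·√q) = sinh(σ(π−θ)/2)/sinh(σθ/2). -/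
open Real

theorem square_lattice_critical_surface_realization
    (q σ p₁ p₂ : ℝ) (hq : 4 < q) (hσ : 0 < σ)
    (hspin : Real.cosh (σ * π / 2) = Real.sqrt q / 2)
    (hp₁ : p₁ ∈ Set.Ioo (0 : ℝ) 1) (hp₂ : p₂ ∈ Set.Ioo (0 : ℝ) 1)
    (hcrit : p₁ * p₂ = q * (1 - p₁) * (1 - p₂)) :
    ∃! θ : ℝ, θ ∈ Set.Ioo 0 π ∧
      p₁ / ((1 - p₁) * Real.sqrt q)
        = Real.sinh (σ * θ / 2) / Real.sinh (σ * (π - θ) / 2) ∧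
      p₂ / ((1 - p₂) * Real.sqrt q)
        = Real.sinh (σ * (π - θ) / 2) / Real.sinh (σ * θ / 2) := by
  obtain ⟨hp₁0, hp₁1⟩ := hp₁
  obtain ⟨hp₂0, hp₂1⟩ := hp₂
  have hq0 : (0:ℝ) < q := by linarith
  have hsq : 0 < Real.sqrt q := Real.sqrt_pos.mpr hq0
  have h1p₁ : 0 < 1 - p₁ := by linarith
  have h1p₂ : 0 < 1 - p₂ := by linarith
  set r₁ := p₁ / ((1 - p₁) * Real.sqrt q) with hr₁
  set r₂ := p₂ / ((1 - p₂) * Real.sqrt q) with hr₂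
  have hr₁0 : 0 < r₁ := div_pos hp₁0 (mul_pos h1p₁ hsq)
  have hr₂0 : 0 < r₂ := div_pos hp₂0 (mul_pos h1p₂ hsq)
  have hsqq : Real.sqrt q * Real.sqrt q = q := Real.mul_self_sqrt hq0.le
  have hprod : r₁ * r₂ = 1 := by
    rw [hr₁, hr₂, div_mul_div_comm, div_eq_one_iff_eq (by positivity)]
    nlinarith [hsqq]
  set g : ℝ → ℝ := fun θ => Real.sinh (σ * θ / 2) - r₁ * Real.sinh (σ * (π - θ) / 2)
    with hg
  have hgmono : StrictMono g := by
    intro a b hab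
    have h1 : Real.sinh (σ * a / 2) < Real.sinh (σ * b / 2) :=
      Real.sinh_lt_sinh.mpr (by nlinarith)
    have h2 : Real.sinh (σ * (π - b) / 2) < Real.sinh (σ * (π - a) / 2) :=
      Real.sinh_lt_sinh.mpr (by nlinarith)
    have h3 := mul_lt_mul_of_pos_left h2 hr₁0
    simp only [hg]
    linarith
  have hcont : Continuous g := by
    apply Continuous.sub
    · exact Real.continuous_sinh.comp (by continuity)
    · exact continuous_const.mul (Real.continuous_sinh.comp (by continuity))
  have hπ2 : 0 < σ * π / 2 := by positivity
  have hg0 : g 0 < 0 := by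
    have : 0 < Real.sinh (σ * (π - 0) / 2) := Real.sinh_pos_iff.mpr (by norm_num; positivity)
    simp only [hg, mul_zero, zero_div, Real.sinh_zero, zero_sub]
    nlinarith
  have hgπ : 0 < g π := by
    simp only [hg, sub_self, mul_zero, zero_div, Real.sinh_zero]
    have : 0 < Real.sinh (σ * π / 2) := Real.sinh_pos_iff.mpr hπ2
    nlinarith
  have hmem : (0:ℝ) ∈ Set.Ioo (g 0) (g π) := ⟨hg0, hgπ⟩
  obtain ⟨θ, hθmem, hθeq⟩ :=
    intermediate_value_Ioo Real.pi_pos.le hcont.continuousOn hmem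
  obtain ⟨hθ0, hθπ⟩ := hθmem
  have hA : 0 < Real.sinh (σ * θ / 2) := Real.sinh_pos_iff.mpr (by positivity)
  have hB : 0 < Real.sinh (σ * (π - θ) / 2) := by
    apply Real.sinh_pos_iff.mpr
    have : 0 < π - θ := by linarith
    positivity
  have hkey : Real.sinh (σ * θ / 2) = r₁ * Real.sinh (σ * (π - θ) / 2) := by
    have := hθeq
    simp only [hg] at this
    linarith
  have heq1 : r₁ = Real.sinh (σ * θ / 2) / Real.sinh (σ * (π - θ) / 2) := by
    rw [eq_div_iff hB.ne', hkey]
  have heq2 : r₂ = Real.sinh (σ * (π - θ) / 2) / Real.sinh (σ * θ / 2) := by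
    rw [eq_div_iff hA.ne', hkey]
    linear_combination Real.sinh (σ * (π - θ) / 2) * hprod
  refine ⟨θ, ⟨⟨hθ0, hθπ⟩, heq1, heq2⟩, ?_⟩
  rintro θ' ⟨⟨hθ'0, hθ'π⟩, h1, _⟩
  have hB' : 0 < Real.sinh (σ * (π - θ') / 2) := by
    apply Real.sinh_pos_iff.mpr
    have : 0 < π - θ' := by linarith
    positivity
  have hkey' : Real.sinh (σ * θ' / 2) = r₁ * Real.sinh (σ * (π - θ') / 2) := by
    rw [eq_div_iff hB'.ne'] at h1
    linarith [h1]
  have : g θ' = g θ := by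
    simp only [hg, hθeq]
    simp only [hg] at hθeq
    linarith
  exact hgmono.injective this
end

section
/- Let σ > 0 and set √q := 2·cosh(σπ/2). Let θ₁, θ₂, θ₃ ∈ (0,π) with θ₁ + θ₂ + θ₃ = π, and set xᵢ = sinh(σθᵢ/2)/sinh(σ(π−θᵢ)/2) for i = 1,2,3. Then √q·x₁x₂x₃ + x₁x₂ + x₂x₃ + x₃x₁ = 1. Equivalently, writing 2s_i = σθᵢ: 2·cosh(s₁+s₂+s₃)·sinh s₁·sinh s₂·sinh s₃ + Σ_{i<j} sinh sᵢ·sinh s_j·sinh(sᵢ+s_j) = sinh(s₁+s₂)·sinh(s₂+s₃)·sinh(s₁+s₃). -/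
open Real

lemma sinh_triple_identity (s₁ s₂ s₃ : ℝ) :
    2 * Real.cosh (s₁ + s₂ + s₃) * (Real.sinh s₁ * Real.sinh s₂ * Real.sinh s₃)
        + (Real.sinh s₁ * Real.sinh s₂ * Real.sinh (s₁ + s₂)
          + Real.sinh s₁ * Real.sinh s₃ * Real.sinh (s₁ + s₃)
          + Real.sinh s₂ * Real.sinh s₃ * Real.sinh (s₂ + s₃))
      = Real.sinh (s₁ + s₂) * Real.sinh (s₂ + s₃) * Real.sinh (s₁ + s₃) := by
  simp only [Real.sinh_eq, Real.cosh_eq, Real.exp_add, Real.exp_neg, Real.exp_add]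
  have h1 := Real.exp_ne_zero s₁
  have h2 := Real.exp_ne_zero s₂
  have h3 := Real.exp_ne_zero s₃
  field_simp
  ring

theorem triangular_lattice_critical_identity
    (σ θ₁ θ₂ θ₃ : ℝ) (hσ : 0 < σ)
    (h₁ : θ₁ ∈ Set.Ioo 0 π) (h₂ : θ₂ ∈ Set.Ioo 0 π) (h₃ : θ₃ ∈ Set.Ioo 0 π)
    (hsum : θ₁ + θ₂ + θ₃ = π)
    (sqrtq : ℝ) (hq : sqrtq = 2 * Real.cosh (σ * π / 2))
    (x₁ x₂ x₃ : ℝ)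
    (hx₁ : x₁ = Real.sinh (σ * θ₁ / 2) / Real.sinh (σ * (π - θ₁) / 2))
    (hx₂ : x₂ = Real.sinh (σ * θ₂ / 2) / Real.sinh (σ * (π - θ₂) / 2))
    (hx₃ : x₃ = Real.sinh (σ * θ₃ / 2) / Real.sinh (σ * (π - θ₃) / 2))
    (s₁ s₂ s₃ : ℝ) (hs₁ : 2 * s₁ = σ * θ₁) (hs₂ : 2 * s₂ = σ * θ₂)
    (hs₃ : 2 * s₃ = σ * θ₃) :
    sqrtq * (x₁ * x₂ * x₃) + x₁ * x₂ + x₂ * x₃ + x₃ * x₁ = 1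
    ∧ 2 * Real.cosh (s₁ + s₂ + s₃) * (Real.sinh s₁ * Real.sinh s₂ * Real.sinh s₃)
        + (Real.sinh s₁ * Real.sinh s₂ * Real.sinh (s₁ + s₂)
          + Real.sinh s₁ * Real.sinh s₃ * Real.sinh (s₁ + s₃)
          + Real.sinh s₂ * Real.sinh s₃ * Real.sinh (s₂ + s₃))
      = Real.sinh (s₁ + s₂) * Real.sinh (s₂ + s₃) * Real.sinh (s₁ + s₃) := by
  have key := sinh_triple_identity s₁ s₂ s₃
  refine ⟨?_, key⟩
  -- rewrite arguments in terms of sᵢ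
  have e1 : σ * θ₁ / 2 = s₁ := by linarith
  have e2 : σ * θ₂ / 2 = s₂ := by linarith
  have e3 : σ * θ₃ / 2 = s₃ := by linarith
  have eπ : σ * π / 2 = s₁ + s₂ + s₃ := by
    have : σ * π = σ * θ₁ + σ * θ₂ + σ * θ₃ := by rw [← hsum]; ring
    linarith
  have f1 : σ * (π - θ₁) / 2 = s₂ + s₃ := by
    have : σ * (π - θ₁) = σ * π - σ * θ₁ := by ring
    linarith
  have f2 : σ * (π - θ₂) / 2 = s₁ + s₃ := by
    have : σ * (π - θ₂) = σ * π - σ * θ₂ := by ring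
    linarith
  have f3 : σ * (π - θ₃) / 2 = s₁ + s₂ := by
    have : σ * (π - θ₃) = σ * π - σ * θ₃ := by ring
    linarith
  have hs1pos : 0 < s₁ := by nlinarith [mul_pos hσ h₁.1]
  have hs2pos : 0 < s₂ := by nlinarith [mul_pos hσ h₂.1]
  have hs3pos : 0 < s₃ := by nlinarith [mul_pos hσ h₃.1]
  have d1 : Real.sinh (s₂ + s₃) ≠ 0 := ne_of_gt (Real.sinh_pos_iff.mpr (by linarith))
  have d2 : Real.sinh (s₁ + s₃) ≠ 0 := ne_of_gt (Real.sinh_pos_iff.mpr (by linarith))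
  have d3 : Real.sinh (s₁ + s₂) ≠ 0 := ne_of_gt (Real.sinh_pos_iff.mpr (by linarith))
  subst hq hx₁ hx₂ hx₃
  rw [e1, e2, e3, eπ, f1, f2, f3]
  field_simp
  linear_combination key
end

section
/- Let σ > 0 and set √q := 2·cosh(σπ/2). Let φ₁, φ₂, φ₃ ∈ (0,π) with φ₁ + φ₂ + φ₃ = 2π, and set yᵢ = sinh(σφᵢ/2)/sinh(σ(π−φᵢ)/2) for i = 1,2,3. Then y₁y₂y₃ = y₁ + y₂ + y₃ + √q. -/
open Real

set_option maxHeartbeats 1600000 in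
theorem hexagonal_lattice_critical_identity
    (σ φ₁ φ₂ φ₃ : ℝ) (hσ : 0 < σ)
    (h₁ : φ₁ ∈ Set.Ioo 0 π) (h₂ : φ₂ ∈ Set.Ioo 0 π) (h₃ : φ₃ ∈ Set.Ioo 0 π)
    (hsum : φ₁ + φ₂ + φ₃ = 2 * π)
    (sqrtq : ℝ) (hq : sqrtq = 2 * Real.cosh (σ * π / 2))
    (y₁ y₂ y₃ : ℝ)
    (hy₁ : y₁ = Real.sinh (σ * φ₁ / 2) / Real.sinh (σ * (π - φ₁) / 2))
    (hy₂ : y₂ = Real.sinh (σ * φ₂ / 2) / Real.sinh (σ * (π - φ₂) / 2))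
    (hy₃ : y₃ = Real.sinh (σ * φ₃ / 2) / Real.sinh (σ * (π - φ₃) / 2)) :
    y₁ * y₂ * y₃ = y₁ + y₂ + y₃ + sqrtq := by
  obtain ⟨h1a, h1b⟩ := h₁
  obtain ⟨h2a, h2b⟩ := h₂
  obtain ⟨h3a, h3b⟩ := h₃
  set x₁ := Real.exp (σ * φ₁ / 2) with hx₁
  set x₂ := Real.exp (σ * φ₂ / 2) with hx₂
  set x₃ := Real.exp (σ * φ₃ / 2) with hx₃
  set u := Real.exp (σ * π / 2) with hu
  have hx₁p : 0 < x₁ := Real.exp_pos _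
  have hx₂p : 0 < x₂ := Real.exp_pos _
  have hx₃p : 0 < x₃ := Real.exp_pos _
  have hup : 0 < u := Real.exp_pos _
  have hx₁0 : x₁ ≠ 0 := ne_of_gt hx₁p
  have hx₂0 : x₂ ≠ 0 := ne_of_gt hx₂p
  have hx₃0 : x₃ ≠ 0 := ne_of_gt hx₃p
  have hu0 : u ≠ 0 := ne_of_gt hup
  have hlt₁ : x₁ < u := Real.exp_lt_exp.mpr (by nlinarith)
  have hlt₂ : x₂ < u := Real.exp_lt_exp.mpr (by nlinarith)
  have hlt₃ : x₃ < u := Real.exp_lt_exp.mpr (by nlinarith)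
  have m1 : u * u - x₁ * x₁ ≠ 0 := by nlinarith
  have m2 : u * u - x₂ * x₂ ≠ 0 := by nlinarith
  have m3 : u * u - x₃ * x₃ ≠ 0 := by nlinarith
  have hrel : x₃ = u * u / (x₁ * x₂) := by
    rw [eq_div_iff (by positivity), hx₁, hx₂, hx₃, hu,
      ← Real.exp_add, ← Real.exp_add, ← Real.exp_add, Real.exp_eq_exp]
    linear_combination (σ / 2) * hsum
  have s1 : Real.sinh (σ * φ₁ / 2) = (x₁ - x₁⁻¹) / 2 := by
    rw [Real.sinh_eq, Real.exp_neg]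
  have s2 : Real.sinh (σ * φ₂ / 2) = (x₂ - x₂⁻¹) / 2 := by
    rw [Real.sinh_eq, Real.exp_neg]
  have s3 : Real.sinh (σ * φ₃ / 2) = (x₃ - x₃⁻¹) / 2 := by
    rw [Real.sinh_eq, Real.exp_neg]
  have g1 : Real.sinh (σ * (π - φ₁) / 2) = (u / x₁ - x₁ / u) / 2 := by
    rw [show σ * (π - φ₁) / 2 = σ * π / 2 - σ * φ₁ / 2 by ring, Real.sinh_eq,
      show -(σ * π / 2 - σ * φ₁ / 2) = σ * φ₁ / 2 - σ * π / 2 by ring,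
      Real.exp_sub, Real.exp_sub]
  have g2 : Real.sinh (σ * (π - φ₂) / 2) = (u / x₂ - x₂ / u) / 2 := by
    rw [show σ * (π - φ₂) / 2 = σ * π / 2 - σ * φ₂ / 2 by ring, Real.sinh_eq,
      show -(σ * π / 2 - σ * φ₂ / 2) = σ * φ₂ / 2 - σ * π / 2 by ring,
      Real.exp_sub, Real.exp_sub]
  have g3 : Real.sinh (σ * (π - φ₃) / 2) = (u / x₃ - x₃ / u) / 2 := by
    rw [show σ * (π - φ₃) / 2 = σ * π / 2 - σ * φ₃ / 2 by ring, Real.sinh_eq,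
      show -(σ * π / 2 - σ * φ₃ / 2) = σ * φ₃ / 2 - σ * π / 2 by ring,
      Real.exp_sub, Real.exp_sub]
  have c : Real.cosh (σ * π / 2) = (u + u⁻¹) / 2 := by
    rw [Real.cosh_eq, Real.exp_neg]
  have q1 : Real.sinh (σ * φ₁ / 2) / Real.sinh (σ * (π - φ₁) / 2)
      = (x₁ * x₁ - 1) * u / (u * u - x₁ * x₁) := by
    rw [s1, g1]; field_simp
  have q2 : Real.sinh (σ * φ₂ / 2) / Real.sinh (σ * (π - φ₂) / 2)
      = (x₂ * x₂ - 1) * u / (u * u - x₂ * x₂) := by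
    rw [s2, g2]; field_simp
  have q3 : Real.sinh (σ * φ₃ / 2) / Real.sinh (σ * (π - φ₃) / 2)
      = (x₃ * x₃ - 1) * u / (u * u - x₃ * x₃) := by
    rw [s3, g3]; field_simp
  have hrel' : x₁ * x₂ * x₃ = u * u := by
    rw [hx₁, hx₂, hx₃, hu, ← Real.exp_add, ← Real.exp_add, ← Real.exp_add,
      Real.exp_eq_exp]
    linear_combination (σ / 2) * hsum
  rw [hy₁, hy₂, hy₃, hq, q1, q2, q3, c]
  have m1' : u ^ 2 - x₁ ^ 2 ≠ 0 := by nlinarith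
  have m2' : u ^ 2 - x₂ ^ 2 ≠ 0 := by nlinarith
  have m3' : u ^ 2 - x₃ ^ 2 ≠ 0 := by nlinarith
  field_simp
  linear_combination ((1 : ℝ) * x₁ ^ 1 * x₂ ^ 1 * x₃ ^ 1 * u ^ 4 + (-2 : ℝ) * x₁ ^ 1 * x₂ ^ 1 * x₃ ^ 1 * u ^ 2 + (1 : ℝ) * x₁ ^ 1 * x₂ ^ 1 * x₃ ^ 1 + (1 : ℝ) * u ^ 6 + (-2 : ℝ) * u ^ 4 + (1 : ℝ) * u ^ 2) * hrel'
end

section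
/- For every β ∈ (0,1) there exist q > 4 and β' ∈ (0,1) such that, with σ > 0 defined by cosh(σπ/2) = √q/2, for every θ ∈ (0,π): (β'/√q)·sinh(σθ/2)/sinh(σ(π−θ)/2) ≥ (β/2)·θ/(π−θ). -/
open Real

lemma aux_sinh_le_mul_cosh {x : ℝ} (hx : 0 ≤ x) : Real.sinh x ≤ x * Real.cosh x := by
  have hmono : Monotone (fun y : ℝ => y * Real.cosh y - Real.sinh y) := by
    apply monotone_of_deriv_nonneg
    · exact (differentiable_id.mul Real.differentiable_cosh).sub Real.differentiable_sinh
    · intro y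
      have hD : HasDerivAt (fun y : ℝ => y * Real.cosh y - Real.sinh y)
          (1 * Real.cosh y + y * Real.sinh y - Real.cosh y) y :=
        ((hasDerivAt_id y).mul (Real.hasDerivAt_cosh y)).sub (Real.hasDerivAt_sinh y)
      rw [hD.deriv]
      have : 0 ≤ y * Real.sinh y := by
        rcases le_or_gt 0 y with h | h
        · exact mul_nonneg h (Real.sinh_nonneg_iff.2 h)
        · have h1 : Real.sinh y ≤ 0 := Real.sinh_nonpos_iff.2 h.le
          nlinarith
      linarith
  have := hmono hx
  simpa using this

lemma aux_sinh_mul_le {c x : ℝ} (hc0 : 0 ≤ c) (hc1 : c ≤ 1) (hx : 0 ≤ x) :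
    Real.sinh (c * x) ≤ c * Real.sinh x := by
  have hmono : Monotone (fun y : ℝ => c * Real.sinh y - Real.sinh (c * y)) := by
    apply monotone_of_deriv_nonneg
    · exact (Real.differentiable_sinh.const_mul c).sub
        (Real.differentiable_sinh.comp (differentiable_id.const_mul c))
    · intro y
      have h1 : HasDerivAt (fun y : ℝ => c * y) c y := by
        simpa using (hasDerivAt_id y).const_mul c
      have hD : HasDerivAt (fun y : ℝ => c * Real.sinh y - Real.sinh (c * y))
          (c * Real.cosh y - Real.cosh (c * y) * c) y :=
        ((Real.hasDerivAt_sinh y).const_mul c).sub ((Real.hasDerivAt_sinh (c * y)).comp y h1)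
      rw [hD.deriv]
      have hcc : Real.cosh (c * y) ≤ Real.cosh y := by
        rw [Real.cosh_le_cosh, abs_mul]
        calc |c| * |y| ≤ 1 * |y| := by
              apply mul_le_mul_of_nonneg_right _ (abs_nonneg y)
              rwa [abs_of_nonneg hc0]
          _ = |y| := one_mul _
      nlinarith
  have := hmono hx
  simpa using this

theorem stochastic_domination_reduction
    (β : ℝ) (hβ : β ∈ Set.Ioo (0 : ℝ) 1) :
    ∃ q : ℝ, 4 < q ∧ ∃ β' : ℝ, β' ∈ Set.Ioo (0 : ℝ) 1 ∧
      ∀ σ : ℝ, 0 < σ → Real.cosh (σ * π / 2) = Real.sqrt q / 2 →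
        ∀ θ : ℝ, θ ∈ Set.Ioo 0 π →
          (β' / Real.sqrt q) *
              (Real.sinh (σ * θ / 2) / Real.sinh (σ * (π - θ) / 2))
            ≥ (β / 2) * (θ / (π - θ)) := by
  obtain ⟨hβ0, hβ1⟩ := hβ
  set δ : ℝ := (1 - β) / (2 * β) with hδdef
  have hδ : 0 < δ := div_pos (by linarith) (by linarith)
  set A : ℝ := Real.arsinh δ with hAdef
  have hA : 0 < A := by
    rw [hAdef, ← Real.arsinh_zero]
    exact Real.arsinh_lt_arsinh.2 hδ
  have hsinhA : Real.sinh A = δ := Real.sinh_arsinh δ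
  have hcoshA : Real.cosh A = Real.sqrt (1 + δ ^ 2) := Real.cosh_arsinh δ
  have hcoshA_le : Real.cosh A ≤ 1 + δ := by
    rw [hcoshA]
    have h1 : (1 : ℝ) + δ ^ 2 ≤ (1 + δ) ^ 2 := by nlinarith
    calc Real.sqrt (1 + δ ^ 2) ≤ Real.sqrt ((1 + δ) ^ 2) := Real.sqrt_le_sqrt h1
      _ = 1 + δ := Real.sqrt_sq (by linarith)
  have hch2 : 0 < Real.cosh (A / 2) := Real.cosh_pos (A / 2)
  refine ⟨(2 * Real.cosh (A / 2)) ^ 2, ?_, (1 + β) / 2, ⟨by linarith, by linarith⟩, ?_⟩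
  · have h1 : (1 : ℝ) < Real.cosh (A / 2) := Real.one_lt_cosh.2 (half_pos hA).ne'
    nlinarith
  intro σ hσ hcosh θ hθ
  obtain ⟨hθ0, hθπ⟩ := hθ
  have hπ : 0 < π := Real.pi_pos
  have hπθ : 0 < π - θ := by linarith
  have hσπ2 : 0 < σ * π / 2 := div_pos (mul_pos hσ hπ) two_pos
  have hσθ2 : 0 < σ * θ / 2 := div_pos (mul_pos hσ hθ0) two_pos
  have hσπθ2 : 0 < σ * (π - θ) / 2 := div_pos (mul_pos hσ hπθ) two_pos
  have hsq : Real.sqrt ((2 * Real.cosh (A / 2)) ^ 2) = 2 * Real.cosh (A / 2) :=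
    Real.sqrt_sq (by positivity)
  rw [hsq] at hcosh ⊢
  -- σ * π / 2 = A / 2
  have hσπ : σ * π / 2 = A / 2 := by
    have h1 : Real.cosh (σ * π / 2) = Real.cosh (A / 2) := by
      rw [hcosh]; ring
    have h2 : |σ * π / 2| = |A / 2| := by
      have ha := Real.cosh_le_cosh.1 h1.le
      have hb := Real.cosh_le_cosh.1 h1.ge
      linarith
    rw [abs_of_pos hσπ2, abs_of_pos (half_pos hA)] at h2
    exact h2
  -- key scalar inequality
  have hβ' : β * (1 + δ) = (1 + β) / 2 := by
    rw [hδdef]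
    field_simp
    ring
  have hkey : β * (2 * Real.cosh (A / 2)) * Real.sinh (σ * π / 2)
      ≤ 2 * ((1 + β) / 2) * (σ * π / 2) := by
    rw [hσπ]
    have h2m : Real.sinh A = 2 * Real.sinh (A / 2) * Real.cosh (A / 2) := by
      have := Real.sinh_two_mul (A / 2)
      rw [show 2 * (A / 2) = A by ring] at this
      exact this
    have hδle : δ ≤ A * (1 + δ) := by
      have h3 : Real.sinh A ≤ A * Real.cosh A := aux_sinh_le_mul_cosh hA.le
      rw [hsinhA] at h3
      have h4 : A * Real.cosh A ≤ A * (1 + δ) :=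
        mul_le_mul_of_nonneg_left hcoshA_le hA.le
      linarith
    have heq : β * (2 * Real.cosh (A / 2)) * Real.sinh (A / 2) = β * Real.sinh A := by
      rw [h2m]; ring
    rw [heq, hsinhA]
    calc β * δ ≤ β * (A * (1 + δ)) := mul_le_mul_of_nonneg_left hδle hβ0.le
      _ = β * (1 + δ) * A := by ring
      _ = (1 + β) / 2 * A := by rw [hβ']
      _ = 2 * ((1 + β) / 2) * (A / 2) := by ring
  -- bounds on sinh values
  have hS1pos : 0 < Real.sinh (σ * θ / 2) := Real.sinh_pos_iff.2 hσθ2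
  have hS2pos : 0 < Real.sinh (σ * (π - θ) / 2) := Real.sinh_pos_iff.2 hσπθ2
  have hS1 : σ * θ / 2 ≤ Real.sinh (σ * θ / 2) := (Real.self_lt_sinh_iff.2 hσθ2).le
  have hS2 : Real.sinh (σ * (π - θ) / 2)
      ≤ (π - θ) / π * Real.sinh (σ * π / 2) := by
    have hc0 : (0 : ℝ) ≤ (π - θ) / π := le_of_lt (div_pos hπθ hπ)
    have hc1 : (π - θ) / π ≤ 1 := by
      rw [div_le_one hπ]; linarith
    have := aux_sinh_mul_le hc0 hc1 hσπ2.le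
    have heq : (π - θ) / π * (σ * π / 2) = σ * (π - θ) / 2 := by
      field_simp
    rwa [heq] at this
  -- conclude
  rw [ge_iff_le, div_mul_div_comm, div_mul_div_comm, div_le_div_iff₀
    (mul_pos two_pos hπθ) (mul_pos (mul_pos two_pos hch2) hS2pos)]
  calc β * θ * (2 * Real.cosh (A / 2) * Real.sinh (σ * (π - θ) / 2))
      ≤ β * θ * (2 * Real.cosh (A / 2) * ((π - θ) / π * Real.sinh (σ * π / 2))) := by
        apply mul_le_mul_of_nonneg_left _ (mul_nonneg hβ0.le hθ0.le)
        exact mul_le_mul_of_nonneg_left hS2 (by positivity)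
    _ = (β * (2 * Real.cosh (A / 2)) * Real.sinh (σ * π / 2)) * (θ * (π - θ) / π) := by
        ring
    _ ≤ (2 * ((1 + β) / 2) * (σ * π / 2)) * (θ * (π - θ) / π) := by
        apply mul_le_mul_of_nonneg_right hkey
        exact le_of_lt (div_pos (mul_pos hθ0 hπθ) hπ)
    _ = (1 + β) / 2 * (σ * θ / 2) * (2 * (π - θ)) := by
        field_simp
    _ ≤ (1 + β) / 2 * Real.sinh (σ * θ / 2) * (2 * (π - θ)) := by
        apply mul_le_mul_of_nonneg_right _ (by linarith)
        exact mul_le_mul_of_nonneg_left hS1 (by linarith)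
end
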